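/- Let A₁,…,A_k be D×D integer matrices, and define B₁,…,B_k, B_{k+1} as the (D²+1)×(D²+1) integer block matrices B_i = fromBlocks (A_i ⊗ A_i) 0 0 1 for i ≤ k and B_{k+1} = fromBlocks E₁₁ 0 0 (−1). In ℕ∞, let n₀ = sInf {n ≥ 1 | ∃ i₁,…,i_n ∈ {1,…,k} with (A_{i₁}⋯A_{i_n})_{1,1} = 0} and m₀ = sInf {m ≥ 1 | ∃ j₁,…,j_m ∈ {1,…,k+1} with tr(B_{j₁}⋯B_{j_m}) < 0}. Then m₀ = n₀ + 1. -/

import Mathlib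

/-- The family `B₁,…,B_k,B_{k+1}`: `Bᵢ = fromBlocks (Aᵢ ⊗ Aᵢ) 0 0 1` for `i ≤ k` and
`B_{k+1} = fromBlocks E₁₁ 0 0 (-1)`. -/
def blockFam {D k : ℕ} (hD : 0 < D) (A : Fin k → Matrix (Fin D) (Fin D) ℤ)
    (i : Fin (k + 1)) :
    Matrix ((Fin D × Fin D) ⊕ Unit) ((Fin D × Fin D) ⊕ Unit) ℤ :=
  if h : (i : ℕ) < k then
    Matrix.fromBlocks (Matrix.kroneckerMap (· * ·) (A ⟨i, h⟩) (A ⟨i, h⟩)) 0 0 1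
  else
    Matrix.fromBlocks
      (Matrix.single ((⟨0, hD⟩ : Fin D), (⟨0, hD⟩ : Fin D))
        ((⟨0, hD⟩ : Fin D), (⟨0, hD⟩ : Fin D)) 1) 0 0 (-1)

namespace MPOAux

open Matrix

variable {D k : ℕ} (hD : 0 < D) (A : Fin k → Matrix (Fin D) (Fin D) ℤ)

/-- distinguished index -/
def p (hD : 0 < D) : Fin D × Fin D := (⟨0, hD⟩, ⟨0, hD⟩)

/-- upper-left block of `blockFam` -/
def top (i : Fin (k + 1)) : Matrix (Fin D × Fin D) (Fin D × Fin D) ℤ :=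
  if h : (i : ℕ) < k then Matrix.kroneckerMap (· * ·) (A ⟨i, h⟩) (A ⟨i, h⟩)
  else Matrix.single (p hD) (p hD) 1

/-- lower-right block of `blockFam` -/
def bot (i : Fin (k + 1)) : Matrix Unit Unit ℤ :=
  if (i : ℕ) < k then 1 else -1

lemma blockFam_eq (i : Fin (k + 1)) :
    blockFam hD A i = Matrix.fromBlocks (top hD A i) 0 0 (bot i) := by
  unfold blockFam top bot p
  split_ifs <;> rfl

lemma prod_blocks (l : List (Fin (k + 1))) :
    (l.map (blockFam hD A)).prod =
      Matrix.fromBlocks ((l.map (top hD A)).prod) 0 0 ((l.map bot).prod) := by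
  induction l with
  | nil => simp [Matrix.fromBlocks_one]
  | cons a l ih =>
      simp only [List.map_cons, List.prod_cons, ih, blockFam_eq hD A a,
        Matrix.fromBlocks_multiply]
      simp

lemma trace_fromBlocks' (X : Matrix (Fin D × Fin D) (Fin D × Fin D) ℤ)
    (d : Matrix Unit Unit ℤ) :
    Matrix.trace (Matrix.fromBlocks X 0 0 d) = Matrix.trace X + Matrix.trace d := by
  simp [Matrix.trace, Matrix.fromBlocks, Fintype.sum_sum_type, Matrix.diag]

lemma bot_prod (l : List (Fin (k + 1))) :
    Matrix.trace ((l.map bot).prod) = 1 ∨ Matrix.trace ((l.map bot).prod) = -1 := by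
  induction l with
  | nil => left; simp [Matrix.trace]
  | cons a l ih =>
      have h1 : ∀ M : Matrix Unit Unit ℤ,
          Matrix.trace ((bot a) * M) = Matrix.trace (bot a) * Matrix.trace M := by
        intro M
        simp [Matrix.trace, Matrix.mul_apply, Matrix.diag]
      have h2 : Matrix.trace (bot (k := k) a) = 1 ∨ Matrix.trace (bot (k := k) a) = -1 := by
        unfold bot; split_ifs
        · left; simp [Matrix.trace]
        · right; simp [Matrix.trace]
      simp only [List.map_cons, List.prod_cons, h1]
      rcases h2 with h | h <;> rcases ih with h' | h' <;> simp [h, h']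

/-- entry of the product of top blocks at `(p, p)` -/
def topEntry (l : List (Fin (k + 1))) : ℤ :=
  ((l.map (top hD A)).prod) (p hD) (p hD)

lemma kron_prod (w : List (Fin k)) :
    ((w.map fun i => Matrix.kroneckerMap (· * ·) (A i) (A i)).prod) =
      Matrix.kroneckerMap (· * ·) ((w.map A).prod) ((w.map A).prod) := by
  induction w with
  | nil => simp [Matrix.one_kronecker_one]
  | cons a w ih => simp [ih, ← Matrix.mul_kronecker_mul]

/-- a letter is an A-letter iff `i < k` -/
lemma top_eq_of_lt {i : Fin (k + 1)} (h : (i : ℕ) < k) :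
    top hD A i = Matrix.kroneckerMap (· * ·) (A ⟨i, h⟩) (A ⟨i, h⟩) := by
  simp [top, h]

lemma top_eq_of_not_lt {i : Fin (k + 1)} (h : ¬ (i : ℕ) < k) :
    top hD A i = Matrix.single (p hD) (p hD) 1 := by
  simp [top, h]

/-- If every letter of `l` is an A-letter, the top product is a Kronecker square. -/
lemma top_prod_of_all_lt (l : List (Fin (k + 1))) (hl : ∀ i ∈ l, (i : ℕ) < k) :
    ∃ w : List (Fin k), w.length = l.length ∧
      (l.map (top hD A)).prod =
        Matrix.kroneckerMap (· * ·) ((w.map A).prod) ((w.map A).prod) := by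
  induction l with
  | nil => exact ⟨[], rfl, by simp [Matrix.one_kronecker_one]⟩
  | cons a l ih =>
      have ha : (a : ℕ) < k := hl a (List.mem_cons_self (a := a) (l := l))
      obtain ⟨w, hw, hprod⟩ := ih (fun i hi => hl i (List.mem_cons_of_mem a hi))
      refine ⟨⟨a, ha⟩ :: w, by simp [hw], ?_⟩
      simp only [List.map_cons, List.prod_cons, hprod, top_eq_of_lt hD A ha,
        Matrix.mul_kronecker_mul]

lemma topEntry_nonneg_and (n : ℕ) : ∀ l : List (Fin (k + 1)), l.length ≤ n →
    0 ≤ topEntry hD A l ∧ (topEntry hD A l = 0 →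
      ∃ w : List (Fin k), 1 ≤ w.length ∧ w.length ≤ l.length ∧
        ((w.map A).prod) ⟨0, hD⟩ ⟨0, hD⟩ = 0) := by
  induction n with
  | zero =>
      intro l hl
      rw [List.length_eq_zero_iff.mp (Nat.le_zero.mp hl)]
      constructor
      · simp [topEntry]
      · intro h; exfalso; simp [topEntry, Matrix.one_apply] at h
  | succ n ih =>
      intro l hl
      by_cases hA : ∀ i ∈ l, (i : ℕ) < k
      · obtain ⟨w, hw, hprod⟩ := top_prod_of_all_lt hD A l hA
        have he : topEntry hD A l = (((w.map A).prod) ⟨0, hD⟩ ⟨0, hD⟩) ^ 2 := by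
          simp [topEntry, hprod, p, Matrix.kroneckerMap_apply, sq]
        constructor
        · rw [he]; positivity
        · intro h0
          rw [he] at h0
          have hz : ((w.map A).prod) ⟨0, hD⟩ ⟨0, hD⟩ = 0 := by
            exact pow_eq_zero_iff (n := 2) (by norm_num) |>.mp h0
          refine ⟨w, ?_, hw.le, hz⟩
          rcases Nat.eq_zero_or_pos w.length with h | h
          · exfalso
            rw [List.length_eq_zero_iff.mp h] at hz
            simp [Matrix.one_apply] at hz
          · exact h
      · push_neg at hA
        obtain ⟨e, hel, he⟩ := hA
        have he : ¬ (e : ℕ) < k := not_lt.mpr he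
        obtain ⟨l₁, l₂, rfl⟩ := List.append_of_mem hel
        have hsplit : topEntry hD A (l₁ ++ e :: l₂) =
            topEntry hD A l₁ * topEntry hD A l₂ := by
          unfold topEntry
          rw [List.map_append, List.prod_append, List.map_cons, List.prod_cons,
            top_eq_of_not_lt hD A he]
          rw [Matrix.mul_apply]
          rw [Finset.sum_eq_single (p hD)]
          · rw [Matrix.single_mul_apply_same]
            ring
          · intro q _ hq
            rw [Matrix.single_mul_apply_of_ne (h := hq)]
            ring
          · intro h; exact absurd (Finset.mem_univ _) h
        have h1 : l₁.length ≤ n := by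
          have := hl; simp at this; omega
        have h2 : l₂.length ≤ n := by
          have := hl; simp at this; omega
        obtain ⟨ha1, hb1⟩ := ih l₁ h1
        obtain ⟨ha2, hb2⟩ := ih l₂ h2
        constructor
        · rw [hsplit]; positivity
        · intro h0
          rw [hsplit] at h0
          rcases mul_eq_zero.mp h0 with h | h
          · obtain ⟨w, hw1, hw2, hw3⟩ := hb1 h
            exact ⟨w, hw1, by simp; omega, hw3⟩
          · obtain ⟨w, hw1, hw2, hw3⟩ := hb2 h
            exact ⟨w, hw1, by simp; omega, hw3⟩

/-- Key lemma: negative trace gives a short zero word. -/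
lemma neg_trace_gives_word (l : List (Fin (k + 1)))
    (hneg : Matrix.trace ((l.map (blockFam hD A)).prod) < 0) :
    ∃ w : List (Fin k), 1 ≤ w.length ∧ w.length + 1 ≤ l.length ∧
      ((w.map A).prod) ⟨0, hD⟩ ⟨0, hD⟩ = 0 := by
  by_cases hA : ∀ i ∈ l, (i : ℕ) < k
  · exfalso
    obtain ⟨w, hw, hprod⟩ := top_prod_of_all_lt hD A l hA
    rw [prod_blocks, trace_fromBlocks', hprod, Matrix.trace_kronecker] at hneg
    have hb := bot_prod (k := k) l
    have : ∀ i ∈ l, (i : ℕ) < k := hA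
    have hbot : Matrix.trace ((l.map bot).prod) = 1 := by
      have : (l.map (bot (k := k))) = l.map (fun _ => (1 : Matrix Unit Unit ℤ)) := by
        apply List.map_congr_left
        intro i hi
        simp [bot, hA i hi]
      rw [this, List.prod_eq_one (by simp)]
      simp
    rw [hbot] at hneg
    nlinarith [sq_nonneg (Matrix.trace ((w.map A).prod))]
  · push_neg at hA
    obtain ⟨e, hel, he⟩ := hA
    have he : ¬ (e : ℕ) < k := not_lt.mpr he
    obtain ⟨l₁, l₂, rfl⟩ := List.append_of_mem hel
    -- rotate: trace (prod (l₁ ++ e :: l₂)) = trace (prod (e :: (l₂ ++ l₁)))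
    have hrot : Matrix.trace (((l₁ ++ e :: l₂).map (blockFam hD A)).prod) =
        Matrix.trace (((e :: (l₂ ++ l₁)).map (blockFam hD A)).prod) := by
      rw [List.map_append, List.prod_append, Matrix.trace_mul_comm]
      rw [List.map_cons, List.map_cons, List.map_append, List.prod_cons, List.prod_cons,
        List.prod_append]
      rw [mul_assoc]
    rw [hrot] at hneg
    set l' := l₂ ++ l₁ with hl'
    rw [List.map_cons, List.prod_cons, blockFam_eq hD A e, prod_blocks,
      Matrix.fromBlocks_multiply] at hneg
    simp only [Matrix.zero_mul, Matrix.mul_zero, add_zero, zero_add] at hneg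
    rw [trace_fromBlocks'] at hneg
    have htop : Matrix.trace (top hD A e * (l'.map (top hD A)).prod) =
        topEntry hD A l' := by
      rw [top_eq_of_not_lt hD A he]
      rw [Matrix.trace]
      rw [Finset.sum_eq_single (p hD)]
      · simp [Matrix.diag, topEntry]
      · intro q _ hq
        simp [Matrix.diag, Matrix.single_mul_apply_of_ne (h := hq)]
      · intro h; exact absurd (Finset.mem_univ _) h
    rw [htop] at hneg
    have hbge : -1 ≤ Matrix.trace ((bot (k := k) e * (l'.map bot).prod)) := by
      have h1 : ∀ M : Matrix Unit Unit ℤ,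
          Matrix.trace ((bot (k := k) e) * M) = Matrix.trace (bot (k := k) e) * Matrix.trace M := by
        intro M; simp [Matrix.trace, Matrix.mul_apply, Matrix.diag]
      rw [h1]
      have h2 : Matrix.trace (bot (k := k) e) = -1 := by
        simp [bot, he, Matrix.trace]
      rcases bot_prod (k := k) l' with h' | h' <;> rw [h2, h'] <;> norm_num
    obtain ⟨hnn, hzero⟩ := topEntry_nonneg_and hD A l'.length l' le_rfl
    have h0 : topEntry hD A l' = 0 := by omega
    obtain ⟨w, hw1, hw2, hw3⟩ := hzero h0
    refine ⟨w, hw1, ?_, hw3⟩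
    have : l'.length + 1 = (l₁ ++ e :: l₂).length := by simp [hl']; omega
    omega

lemma top_castSucc (j : Fin k) :
    top hD A (Fin.castSucc j) = Matrix.kroneckerMap (· * ·) (A j) (A j) := by
  have h : ((Fin.castSucc j : Fin (k + 1)) : ℕ) < k := by simp [Fin.is_lt]
  have hj : (⟨((Fin.castSucc j : Fin (k + 1)) : ℕ), h⟩ : Fin k) = j := by
    ext; simp
  simp [top, h, hj]

lemma bot_castSucc (j : Fin k) : bot (Fin.castSucc j) = 1 := by
  simp [bot, Fin.is_lt]

lemma top_last : top hD A (Fin.last k) = Matrix.single (p hD) (p hD) 1 := by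
  simp [top]

lemma bot_last : bot (k := k) (Fin.last k) = -1 := by
  simp [bot]

lemma exists_neg_trace (n : ℕ) (idx : Fin n → Fin k)
    (hz : (List.ofFn fun j => A (idx j)).prod ⟨0, hD⟩ ⟨0, hD⟩ = 0) :
    Matrix.trace ((List.ofFn fun j : Fin (n + 1) =>
      blockFam hD A ((Fin.snoc (fun i => Fin.castSucc (idx i)) (Fin.last k) :
        Fin (n + 1) → Fin (k + 1)) j)).prod) < 0 := by
  rw [List.ofFn_succ']
  simp only [Fin.snoc_castSucc, Fin.snoc_last]
  rw [List.concat_eq_append, List.prod_append, List.prod_cons, List.prod_nil, mul_one]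
  have h1 : (List.ofFn fun i : Fin n => blockFam hD A (Fin.castSucc (idx i))) =
      (List.ofFn fun i : Fin n => (Fin.castSucc (idx i) : Fin (k+1))).map (blockFam hD A) := by
    rw [List.map_ofFn]; rfl
  set l : List (Fin (k+1)) := List.ofFn fun i : Fin n => (Fin.castSucc (idx i) : Fin (k+1)) with hl
  rw [h1, prod_blocks, blockFam_eq hD A (Fin.last k), top_last, bot_last,
    Matrix.fromBlocks_multiply]
  simp only [Matrix.zero_mul, Matrix.mul_zero, add_zero, zero_add]
  rw [trace_fromBlocks']
  set P : Matrix (Fin D) (Fin D) ℤ := (List.ofFn fun j => A (idx j)).prod with hP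
  have htopl : (l.map (top hD A)).prod = Matrix.kroneckerMap (· * ·) P P := by
    rw [hl, List.map_ofFn]
    have : ((fun i : Fin (k+1) => top hD A i) ∘ fun i : Fin n => Fin.castSucc (idx i)) =
        fun i : Fin n => Matrix.kroneckerMap (· * ·) (A (idx i)) (A (idx i)) := by
      funext i; exact top_castSucc hD A (idx i)
    rw [this]
    have h2 : (List.ofFn fun i : Fin n => Matrix.kroneckerMap (· * ·) (A (idx i)) (A (idx i))) =
        (List.ofFn fun i : Fin n => idx i).map fun j => Matrix.kroneckerMap (· * ·) (A j) (A j) := by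
      rw [List.map_ofFn]; rfl
    rw [h2, kron_prod, hP]
    rw [List.map_ofFn]; rfl
  have hbotl : (l.map bot).prod = 1 := by
    rw [hl, List.map_ofFn]
    apply List.prod_eq_one
    intro x hx
    rw [List.mem_ofFn] at hx
    obtain ⟨i, rfl⟩ := hx
    exact bot_castSucc (idx i)
  rw [htopl, hbotl, one_mul]
  have htr : Matrix.trace (Matrix.kroneckerMap (· * ·) P P *
      Matrix.single (p hD) (p hD) 1) = 0 := by
    rw [Matrix.trace]
    rw [Finset.sum_eq_single (p hD)]
    · rw [Matrix.diag_apply, Matrix.mul_single_apply_same]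
      have : Matrix.kroneckerMap (· * ·) P P (p hD) (p hD) = P ⟨0, hD⟩ ⟨0, hD⟩ * P ⟨0, hD⟩ ⟨0, hD⟩ := rfl
      rw [this, hz]; ring
    · intro q _ hq
      rw [Matrix.diag_apply, Matrix.mul_single_apply_of_ne (hbj := hq)]
    · intro h; exact absurd (Finset.mem_univ _) h
  rw [htr]
  have : Matrix.trace (-1 : Matrix Unit Unit ℤ) = -1 := by
    simp [Matrix.trace]
  rw [this]; norm_num

end MPOAux


theorem mpo_threshold {D k : ℕ} (hD : 0 < D) (A : Fin k → Matrix (Fin D) (Fin D) ℤ) :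
    sInf {ℓ : ℕ∞ | ∃ m : ℕ, ℓ = (m : ℕ∞) ∧ 1 ≤ m ∧
        ∃ idx : Fin m → Fin (k + 1),
          Matrix.trace ((List.ofFn fun j => blockFam hD A (idx j)).prod) < 0} =
      sInf {ℓ : ℕ∞ | ∃ n : ℕ, ℓ = (n : ℕ∞) ∧ 1 ≤ n ∧
        ∃ idx : Fin n → Fin k,
          (List.ofFn fun j => A (idx j)).prod ⟨0, hD⟩ ⟨0, hD⟩ = 0} + 1 := by
  set S₁ : Set ℕ∞ := {ℓ : ℕ∞ | ∃ m : ℕ, ℓ = (m : ℕ∞) ∧ 1 ≤ m ∧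
      ∃ idx : Fin m → Fin (k + 1),
        Matrix.trace ((List.ofFn fun j => blockFam hD A (idx j)).prod) < 0} with hS₁
  set S₂ : Set ℕ∞ := {ℓ : ℕ∞ | ∃ n : ℕ, ℓ = (n : ℕ∞) ∧ 1 ≤ n ∧
      ∃ idx : Fin n → Fin k,
        (List.ofFn fun j => A (idx j)).prod ⟨0, hD⟩ ⟨0, hD⟩ = 0} with hS₂
  apply le_antisymm
  · -- sInf S₁ ≤ sInf S₂ + 1
    rcases Set.eq_empty_or_nonempty S₂ with h | h
    · rw [h, sInf_empty]
      simp
    · have hm := csInf_mem h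
      rw [hS₂] at hm
      obtain ⟨n, hn, hn1, idx, hz⟩ := hm
      rw [hn]
      have hmem : ((n + 1 : ℕ) : ℕ∞) ∈ S₁ := by
        refine ⟨n + 1, rfl, by omega,
          (Fin.snoc (fun i => Fin.castSucc (idx i)) (Fin.last k) :
            Fin (n + 1) → Fin (k + 1)), ?_⟩
        exact MPOAux.exists_neg_trace hD A n idx hz
      have := sInf_le hmem
      rw [Nat.cast_add, Nat.cast_one] at this
      exact this
  · -- sInf S₂ + 1 ≤ sInf S₁
    apply le_sInf
    rintro ℓ ⟨m, rfl, hm1, idx, hneg⟩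
    have h1 : (List.ofFn fun j => blockFam hD A (idx j)) =
        (List.ofFn idx).map (blockFam hD A) := by
      rw [List.map_ofFn]; rfl
    rw [h1] at hneg
    obtain ⟨w, hw1, hw2, hw3⟩ := MPOAux.neg_trace_gives_word hD A (List.ofFn idx) hneg
    rw [List.length_ofFn] at hw2
    have hmem : ((w.length : ℕ) : ℕ∞) ∈ S₂ := by
      refine ⟨w.length, rfl, hw1, w.get, ?_⟩
      have : (List.ofFn fun j => A (w.get j)) = w.map A := by
        rw [show (fun j => A (w.get j)) = A ∘ w.get from rfl, ← List.map_ofFn, List.ofFn_get]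
      rw [this]
      exact hw3
    have hb : sInf S₂ ≤ (w.length : ℕ∞) := sInf_le hmem
    calc sInf S₂ + 1 ≤ (w.length : ℕ∞) + 1 := by gcongr
      _ = ((w.length + 1 : ℕ) : ℕ∞) := by rw [Nat.cast_add, Nat.cast_one]
      _ ≤ (m : ℕ∞) := by exact_mod_cast hw2
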